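/- Let H be a complex Hilbert space, let ϑ = (ϑ_t)_{t≥0} be a family of unital star-algebra endomorphisms of B(H) with ϑ_0 = id and ϑ_{s+t} = ϑ_s ∘ ϑ_t, and let Q ∈ B(H) be an orthogonal projection with Q ≤ ϑ_t(Q) for all t ≥ 0. Then the compressed maps satisfy the semigroup law: for all a ∈ B(H) and all s, t ≥ 0, Q ϑ_s( Q ϑ_t(a) Q ) Q = Q ϑ_{s+t}(a) Q. -/

import Mathlib

open scoped InnerProductSpace

open ContinuousLinearMap in
/-- If `P` and `Q` are orthogonal projections with `Q ≤ P`, then `P * Q = Q`. -/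
lemma proj_mul_of_le
    {H : Type*} [NormedAddCommGroup H] [InnerProductSpace ℂ H] [CompleteSpace H]
    (P Q : H →L[ℂ] H) (hPsa : IsSelfAdjoint P) (hPidem : P * P = P)
    (hQidem : Q * Q = Q) (hle : Q ≤ P) : P * Q = Q := by
  have hpos := (ContinuousLinearMap.le_def Q P).mp hle
  ext x
  have hQQ : Q (Q x) = Q x := by
    conv_rhs => rw [← hQidem, ContinuousLinearMap.mul_apply]
  -- show P (Q x) = Q x by showing ‖(1-P)(Qx)‖² ≤ 0
  set y := Q x with hy
  have hP : P (P y) = P y := by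
    conv_rhs => rw [← hPidem, ContinuousLinearMap.mul_apply]
  have hadj : ContinuousLinearMap.adjoint P = P := by rw [← ContinuousLinearMap.star_eq_adjoint, hPsa]
  have key : (‖y - P y‖ : ℝ)^2 ≤ 0 := by
    have h1 : (⟪y - P y, y - P y⟫_ℂ) = ⟪y, y⟫_ℂ - ⟪P y, y⟫_ℂ := by
      have hPy : ⟪P y, y - P y⟫_ℂ = 0 := by
        rw [← hadj, ContinuousLinearMap.adjoint_inner_left, hadj]
        simp [map_sub, hP]
      rw [inner_sub_left, hPy, sub_zero, inner_sub_right]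
      congr 1
      conv_rhs => rw [← hadj, ContinuousLinearMap.adjoint_inner_left]
    have h2 : 0 ≤ RCLike.re (⟪(P - Q) y, y⟫_ℂ) := (RCLike.nonneg_iff.mp (hpos.inner_nonneg_left y)).1
    have h3 : ⟪(P - Q) y, y⟫_ℂ = ⟪P y, y⟫_ℂ - ⟪y, y⟫_ℂ := by
      rw [ContinuousLinearMap.sub_apply, inner_sub_left, hy, hQQ]
    rw [h3, map_sub] at h2
    have h4 : RCLike.re (⟪y - P y, y - P y⟫_ℂ) = ‖y - P y‖^2 := by
      exact inner_self_eq_norm_sq (𝕜 := ℂ) _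
    have := congrArg RCLike.re h1
    rw [h4, map_sub] at this
    rw [this]
    linarith
  have hsub : y - P y = 0 := by
    have hn := norm_nonneg (y - P y)
    have h0' : ‖y - P y‖ = 0 := by nlinarith
    exact norm_eq_zero.mp h0'
  have hPy : P y = y := by
    have := sub_eq_zero.mp hsub
    exact this.symm
  show (P * Q) x = Q x
  rw [ContinuousLinearMap.mul_apply]
  exact hPy

/-- **Semigroup law for the compression.**
If `ϑ = (ϑ_t)_{t ≥ 0}` is an (algebraic) E₀-semigroup on `B(H)` and `Q` is an orthogonal
projection that is increasing for `ϑ`, then the compressed maps satisfy the semigroup law: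
`Q * ϑ s (Q * ϑ t a * Q) * Q = Q * ϑ (s + t) a * Q` for all `a` and all `s, t ≥ 0`. -/
theorem compression_semigroup_law
    {H : Type*} [NormedAddCommGroup H] [InnerProductSpace ℂ H] [CompleteSpace H]
    (ϑ : NNReal → ((H →L[ℂ] H) →⋆ₐ[ℂ] (H →L[ℂ] H)))
    (h0 : ϑ 0 = StarAlgHom.id ℂ (H →L[ℂ] H))
    (hsemi : ∀ s t : NNReal, ϑ (s + t) = (ϑ s).comp (ϑ t))
    (Q : H →L[ℂ] H) (hQsa : IsSelfAdjoint Q) (hQidem : Q * Q = Q)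
    (hQinc : ∀ t : NNReal, Q ≤ ϑ t Q) :
    ∀ (a : H →L[ℂ] H) (s t : NNReal),
      Q * ϑ s (Q * ϑ t a * Q) * Q = Q * ϑ (s + t) a * Q := by
  intro a s t
  set P := ϑ s Q with hP
  have hPsa : IsSelfAdjoint P := by
    rw [IsSelfAdjoint, hP, ← map_star, hQsa]
  have hPidem : P * P = P := by rw [hP, ← map_mul, hQidem]
  have hPQ : P * Q = Q := proj_mul_of_le P Q hPsa hPidem hQidem (hQinc s)
  have hQP : Q * P = Q := by
    have := congrArg star hPQ
    rwa [star_mul, hQsa, hPsa] at this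
  calc Q * ϑ s (Q * ϑ t a * Q) * Q
      = Q * (P * ϑ s (ϑ t a) * P) * Q := by rw [map_mul, map_mul]
    _ = (Q * P) * ϑ s (ϑ t a) * (P * Q) := by noncomm_ring
    _ = Q * ϑ (s + t) a * Q := by rw [hQP, hPQ, hsemi]; rfl
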